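/- arXiv:0908.3762 — 7 statements merged into one kernel-verified Lean document; each statement's English description precedes it below -/
import Mathlib

section
/- Let f : B → A be a surjective group homomorphism whose kernel is contained in the center of B, let B' be a perfect group (i.e. B' equals its own commutator subgroup), and let b₀, b₁ : B' → B be group homomorphisms with f ∘ b₀ = f ∘ b₁. Then b₀ = b₁. -/
open scoped commutatorElement

private lemma center_commutator_aux {B : Type*} [Group B] (z w a c : B)
    (hz : z ∈ Subgroup.center B) (hw : w ∈ Subgroup.center B) :
    ⁅z * a, w * c⁆ = ⁅a, c⁆ := by
  have hz' := (Subgroup.center B).inv_mem hz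
  have hw' := (Subgroup.center B).inv_mem hw
  rw [Subgroup.mem_center_iff] at hz hw hz' hw'
  simp only [commutatorElement_def]
  calc z * a * (w * c) * (z * a)⁻¹ * (w * c)⁻¹
      = z * (a * w) * (c * a⁻¹ * z⁻¹ * c⁻¹) * w⁻¹ := by group
    _ = z * (w * a) * (c * a⁻¹ * z⁻¹ * c⁻¹) * w⁻¹ := by rw [hw a]
    _ = (z * w) * ((a * c * a⁻¹) * z⁻¹) * (c⁻¹ * w⁻¹) := by group
    _ = (z * w) * (z⁻¹ * (a * c * a⁻¹)) * (c⁻¹ * w⁻¹) := by rw [hz' (a * c * a⁻¹)]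
    _ = (w * z) * (z⁻¹ * (a * c * a⁻¹)) * (c⁻¹ * w⁻¹) := by rw [← hz w]
    _ = w * ((a * c * a⁻¹ * c⁻¹) * w⁻¹) := by group
    _ = w * (w⁻¹ * (a * c * a⁻¹ * c⁻¹)) := by rw [hw' (a * c * a⁻¹ * c⁻¹)]
    _ = a * c * a⁻¹ * c⁻¹ := by group

theorem stmt_0 {A B B' : Type*} [Group A] [Group B] [Group B']
    (f : B →* A) (hf : Function.Surjective f)
    (hker : f.ker ≤ Subgroup.center B)
    (hperf : commutator B' = ⊤)
    (b₀ b₁ : B' →* B) (h : f.comp b₀ = f.comp b₁) : b₀ = b₁ := by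
  have key : ∀ x : B', ∃ z ∈ Subgroup.center B, b₀ x = z * b₁ x := by
    intro x
    refine ⟨b₀ x * (b₁ x)⁻¹, hker ?_, by group⟩
    have := congrArg (fun g : B' →* A => g x) h
    simp only [MonoidHom.comp_apply] at this
    simp [MonoidHom.mem_ker, this]
  have hcomm : ∀ g hh : B', b₀ ⁅g, hh⁆ = b₁ ⁅g, hh⁆ := by
    intro g hh
    obtain ⟨z, hz, hzeq⟩ := key g
    obtain ⟨w, hw, hweq⟩ := key hh
    rw [map_commutatorElement, map_commutatorElement, hzeq, hweq,
      center_commutator_aux _ _ _ _ hz hw]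
  have : (⊤ : Subgroup B') ≤ b₀.eqLocus b₁ := by
    rw [← hperf, commutator_def, Subgroup.commutator_le]
    intro g hg hh hhh
    exact hcomm g hh
  ext x
  exact this (Subgroup.mem_top x)
end

section
/- If f : B → A and g : C → B are surjective group homomorphisms with ker f ⊆ Z(B) and ker g ⊆ Z(C), and C is a perfect group, then the composite f ∘ g : C → A has ker(f ∘ g) ⊆ Z(C); that is, the composite of two central extensions of groups with perfect total group is again a central extension. -/
open scoped commutatorElement IsMulCommutative

theorem stmt_1 {A B C : Type*} [Group A] [Group B] [Group C]
    (f : B →* A) (g : C →* B)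
    (hf : Function.Surjective f) (hg : Function.Surjective g)
    (hfk : f.ker ≤ Subgroup.center B) (hgk : g.ker ≤ Subgroup.center C)
    (hC : commutator C = ⊤) :
    (f.comp g).ker ≤ Subgroup.center C := by
  intro x hx
  have hgx : g x ∈ Subgroup.center B := hfk hx
  have hcent : ∀ c : C, ⁅x, c⁆ ∈ Subgroup.center C := by
    intro c
    apply hgk
    have hcomm : Commute (g x) (g c) :=
      ((Subgroup.mem_center_iff.mp hgx (g c))).symm
    simp [MonoidHom.mem_ker, map_commutatorElement,
      commutatorElement_eq_one_iff_commute.mpr hcomm]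
  let ψ : C →* Subgroup.center C :=
    { toFun := fun c => ⟨⁅x, c⁆, hcent c⟩
      map_one' := by ext; simp
      map_mul' := by
        intro a b
        ext
        have hb : a * ⁅x, b⁆ = ⁅x, b⁆ * a :=
          Subgroup.mem_center_iff.mp (hcent b) a
        show ⁅x, a * b⁆ = ⁅x, a⁆ * ⁅x, b⁆
        have key : ⁅x, a * b⁆ = ⁅x, a⁆ * (a * ⁅x, b⁆ * a⁻¹) := by
          simp only [commutatorElement_def]; group
        rw [key, hb]; group }
  have hker : commutator C ≤ ψ.ker := Abelianization.commutator_subset_ker ψ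
  rw [hC] at hker
  have htriv : ∀ c : C, ⁅x, c⁆ = 1 := by
    intro c
    have : ψ c = 1 := hker (Subgroup.mem_top c)
    exact congrArg Subtype.val this
  rw [Subgroup.mem_center_iff]
  intro c
  exact (commutatorElement_eq_one_iff_commute.mp (htriv c)).symm
end

section
/- Let u : U → A be a universal central extension of groups, meaning u is surjective with ker u ⊆ Z(U), and for every surjective homomorphism f : B → A with ker f ⊆ Z(B) there is a unique homomorphism h : U → B with f ∘ h = u. Then U is a perfect group (and hence so is A). -/
universe u

theorem stmt_4 {A U : Type u} [Group A] [Group U]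
    (u : U →* A) (hu : Function.Surjective u)
    (huc : u.ker ≤ Subgroup.center U)
    (huniv : ∀ (B : Type u) [Group B] (f : B →* A),
      Function.Surjective f → f.ker ≤ Subgroup.center B →
      ∃! h : U →* B, f.comp h = u) :
    commutator U = ⊤ ∧ commutator A = ⊤ := by
  have hUperf : commutator U = ⊤ := by
    set B := U × Abelianization U
    set f : B →* A := u.comp (MonoidHom.fst U (Abelianization U)) with hf
    have hfs : Function.Surjective f := by
      intro a
      obtain ⟨x, hx⟩ := hu a
      exact ⟨(x, 1), hx⟩
    have hfc : f.ker ≤ Subgroup.center B := by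
      intro x hx
      rw [Subgroup.mem_center_iff]
      intro g
      have h1 : x.1 ∈ Subgroup.center U := huc hx
      ext
      · exact (Subgroup.mem_center_iff.mp h1 g.1)
      · exact mul_comm g.2 x.2
    obtain ⟨h, -, hun⟩ := huniv B f hfs hfc
    have e1 : f.comp ((MonoidHom.id U).prod 1) = u := by ext x; rfl
    have e2 : f.comp ((MonoidHom.id U).prod Abelianization.of) = u := by
      ext x; rfl
    have := (hun _ e1).trans (hun _ e2).symm
    have key : ∀ x : U, Abelianization.of x = 1 := by
      intro x
      have := congrArg (fun g : U →* B => (g x).2) this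
      exact this.symm
    have : ∀ x : U, x ∈ commutator U := by
      intro x
      exact (QuotientGroup.eq_one_iff x).mp (key x)
    exact Subgroup.eq_top_iff' _ |>.mpr this
  refine ⟨hUperf, ?_⟩
  have : Subgroup.map u (commutator U) = commutator A := by
    rw [commutator_def, commutator_def, Subgroup.map_commutator,
      Subgroup.map_top_of_surjective u hu]
  rw [← this, hUperf, Subgroup.map_top_of_surjective u hu]
end

section
/- Let u : U → A be a surjective group homomorphism with ker u ⊆ Z(U), where U is perfect and every central extension of U splits (every surjective g : V → U with ker g ⊆ Z(V) admits a homomorphic section). Then u is a universal central extension: for every central extension f : B → A there is a unique homomorphism h : U → B with f ∘ h = u. -/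
universe u

theorem stmt_6 {A U : Type u} [Group A] [Group U]
    (u : U →* A) (hu : Function.Surjective u)
    (huc : u.ker ≤ Subgroup.center U)
    (hperf : commutator U = ⊤)
    (hsplit : ∀ (V : Type u) [Group V] (g : V →* U),
      Function.Surjective g → g.ker ≤ Subgroup.center V →
      ∃ s : U →* V, g.comp s = MonoidHom.id U) :
    ∀ (B : Type u) [Group B] (f : B →* A),
      Function.Surjective f → f.ker ≤ Subgroup.center B →
      ∃! h : U →* B, f.comp h = u := by
  intro B _ f hf hfc
  -- Pullback subgroup of U × B
  let V : Subgroup (U × B) :=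
    { carrier := {p | u p.1 = f p.2}
      mul_mem' := by
        intro a b ha hb
        simp only [Set.mem_setOf_eq] at *
        simp [ha, hb]
      one_mem' := by simp
      inv_mem' := by
        intro a ha
        simp only [Set.mem_setOf_eq] at *
        simp [ha] }
  let g : V →* U := (MonoidHom.fst U B).comp V.subtype
  have hgsurj : Function.Surjective g := by
    intro x
    obtain ⟨b, hb⟩ := hf (u x)
    exact ⟨⟨(x, b), hb.symm⟩, rfl⟩
  have hgc : g.ker ≤ Subgroup.center V := by
    intro v hv
    have hv1 : (v : U × B).1 = 1 := hv
    have hv2 : (v : U × B).2 ∈ f.ker := by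
      have : u (v : U × B).1 = f (v : U × B).2 := v.2
      rw [hv1, map_one] at this
      exact MonoidHom.mem_ker.mpr this.symm
    have hzc := hfc hv2
    rw [Subgroup.mem_center_iff] at hzc ⊢
    intro w
    apply Subtype.ext
    show (w : U × B) * v = v * (w : U × B)
    apply Prod.ext
    · show (w : U × B).1 * (v : U × B).1 = (v : U × B).1 * (w : U × B).1
      simp [hv1]
    · show (w : U × B).2 * (v : U × B).2 = (v : U × B).2 * (w : U × B).2
      exact hzc (w : U × B).2
  obtain ⟨s, hs⟩ := hsplit V g hgsurj hgc
  refine ⟨(MonoidHom.snd U B).comp (V.subtype.comp s), ?_, ?_⟩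
  · ext x
    have h1 : u ((s x : U × B).1) = f ((s x : U × B).2) := (s x).2
    have h2 : ((s x : U × B)).1 = x := DFunLike.congr_fun hs x
    show f ((s x : U × B)).2 = u x
    rw [← h1, h2]
  · -- uniqueness
    intro h hh
    have key : ∀ (h₁ h₂ : U →* B), f.comp h₁ = u → f.comp h₂ = u → h₁ = h₂ := by
      intro h₁ h₂ e₁ e₂
      have cent : ∀ x, h₁ x * (h₂ x)⁻¹ ∈ Subgroup.center B := by
        intro x
        apply hfc
        have e1 : f (h₁ x) = u x := DFunLike.congr_fun e₁ x
        have e2 : f (h₂ x) = u x := DFunLike.congr_fun e₂ x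
        simp [MonoidHom.mem_ker, e1, e2]
      let χ : U →* B :=
        { toFun := fun x => h₁ x * (h₂ x)⁻¹
          map_one' := by simp
          map_mul' := by
            intro a b
            have hc := (Subgroup.mem_center_iff.mp (cent b)) (h₂ a)⁻¹
            simp only [map_mul, mul_inv_rev]
            calc h₁ a * h₁ b * ((h₂ b)⁻¹ * (h₂ a)⁻¹)
                = h₁ a * ((h₁ b * (h₂ b)⁻¹) * (h₂ a)⁻¹) := by group
              _ = h₁ a * ((h₂ a)⁻¹ * (h₁ b * (h₂ b)⁻¹)) := by rw [hc]
              _ = h₁ a * (h₂ a)⁻¹ * (h₁ b * (h₂ b)⁻¹) := by group }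
      have hker : (⊤ : Subgroup U) ≤ χ.ker := by
        rw [← hperf, commutator, Subgroup.commutator_le]
        intro a _ b _
        rw [MonoidHom.mem_ker, map_commutatorElement]
        have hc2 : χ b * χ a = χ a * χ b := (Subgroup.mem_center_iff.mp (cent a)) (χ b)
        rw [commutatorElement_def]
        show χ a * χ b * (χ a)⁻¹ * (χ b)⁻¹ = 1
        rw [← hc2]
        group
      ext x
      have : χ x = 1 := hker (Subgroup.mem_top x)
      have : h₁ x * (h₂ x)⁻¹ = 1 := this
      exact mul_inv_eq_one.mp this
    exact key h _ hh (by
      ext x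
      have h1 : u ((s x : U × B).1) = f ((s x : U × B).2) := (s x).2
      have h2 : ((s x : U × B)).1 = x := DFunLike.congr_fun hs x
      show f ((s x : U × B)).2 = u x
      rw [← h1, h2])
end

section
/- Let f : B → A and g : C → B be central extensions of groups (surjective with central kernels). Then f ∘ g is a universal central extension of A if and only if g is a universal central extension of B. -/
universe u

/-- `u : U →* X` is a universal central extension: it is surjective with central kernel,
and factors uniquely through every central extension of `X`. -/
def IsUniversalCentralExtension {X U : Type u} [Group X] [Group U] (u : U →* X) : Prop :=
  Function.Surjective u ∧ u.ker ≤ Subgroup.center U ∧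
    ∀ (B : Type u) [Group B] (f : B →* X),
      Function.Surjective f → f.ker ≤ Subgroup.center B →
      ∃! h : U →* B, f.comp h = u

open scoped commutatorElement IsMulCommutative

/-- "Perfect" in the convenient form: every hom to a commutative group is trivial. -/
def MyPerf (C : Type u) [Group C] : Prop :=
  ∀ (M : Type u) [CommGroup M] (φ : C →* M), φ = 1

section helpers

variable {G : Type u} [Group G]

lemma comm_left (y k b : G) (hk : ∀ z, z * k = k * z) : ⁅y * k, b⁆ = ⁅y, b⁆ := by
  have h1 : k * b * k⁻¹ = b := by rw [← hk b, mul_assoc, mul_inv_cancel, mul_one]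
  calc ⁅y * k, b⁆ = y * (k * b * k⁻¹) * y⁻¹ * b⁻¹ := by
        simp [commutatorElement_def, mul_inv_rev, mul_assoc]
    _ = ⁅y, b⁆ := by rw [h1, commutatorElement_def]

lemma comm_right (a y k : G) (hk : ∀ z, z * k = k * z) : ⁅a, y * k⁆ = ⁅a, y⁆ := by
  have := congrArg (·⁻¹) (comm_left y k a hk)
  simpa [commutatorElement_inv] using this

lemma comm_mul (a b c : G) (hc : ∀ z, z * ⁅a, c⁆ = ⁅a, c⁆ * z) :
    ⁅a, b * c⁆ = ⁅a, b⁆ * ⁅a, c⁆ := by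
  have h1 : ⁅a, b * c⁆ = ⁅a, b⁆ * (b * ⁅a, c⁆ * b⁻¹) := by group
  rw [h1, hc b]; group

end helpers

section lemmas

/-- The domain of a universal central extension is perfect. -/
lemma perf_of_uce {X U : Type u} [Group X] [Group U] (u : U →* X)
    (hu : IsUniversalCentralExtension u) : MyPerf U := by
  intro M _ φ
  set f : U × M →* X := u.comp (MonoidHom.fst U M) with hf
  have hfs : Function.Surjective f := by
    intro a
    obtain ⟨v, hv⟩ := hu.1 a
    exact ⟨(v, 1), hv⟩
  have hfc : f.ker ≤ Subgroup.center (U × M) := by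
    intro x hx
    have hx1 : x.1 ∈ u.ker := by
      simpa [hf, MonoidHom.mem_ker] using hx
    have hc := hu.2.1 hx1
    refine Subgroup.mem_center_iff.mpr fun y => ?_
    ext
    · exact Subgroup.mem_center_iff.mp hc y.1
    · exact mul_comm y.2 x.2
  obtain ⟨h, -, huniq⟩ := hu.2.2 (U × M) f hfs hfc
  have e1 : f.comp ((MonoidHom.id U).prod 1) = u := by
    ext x; simp [hf]
  have e2 : f.comp ((MonoidHom.id U).prod φ) = u := by
    ext x; simp [hf]
  have := (huniq _ e2).trans (huniq _ e1).symm
  ext x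
  have := congrArg (fun ψ => (ψ x).2) this
  simpa using this

/-- Cancellation: maps from a perfect group into a central extension are determined
by their composition with the extension map. -/
lemma cancel {C D X : Type u} [Group C] [Group D] [Group X] (hperf : MyPerf C)
    (e : D →* X) (he : e.ker ≤ Subgroup.center D) (h1 h2 : C →* D)
    (hc : e.comp h1 = e.comp h2) : h1 = h2 := by
  have hmem : ∀ x, h1 x * (h2 x)⁻¹ ∈ Subgroup.center D := by
    intro x
    apply he
    have := congrArg (fun ψ => ψ x) hc
    simp only [MonoidHom.comp_apply] at this
    simp [MonoidHom.mem_ker, this]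
  set c : C →* Subgroup.center D :=
    { toFun := fun x => ⟨h1 x * (h2 x)⁻¹, hmem x⟩
      map_one' := by ext; simp
      map_mul' := by
        intro x y
        ext
        show h1 (x * y) * (h2 (x * y))⁻¹ = (h1 x * (h2 x)⁻¹) * (h1 y * (h2 y)⁻¹)
        have hz := Subgroup.mem_center_iff.mp (hmem y)
        calc h1 (x * y) * (h2 (x * y))⁻¹
            = h1 x * (h1 y * (h2 y)⁻¹ * (h2 x)⁻¹) := by
              simp [mul_inv_rev, mul_assoc]
          _ = h1 x * ((h2 x)⁻¹ * (h1 y * (h2 y)⁻¹)) := by rw [← hz]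
          _ = (h1 x * (h2 x)⁻¹) * (h1 y * (h2 y)⁻¹) := by rw [mul_assoc] } with hcdef
  have := hperf _ c
  ext x
  have hx := congrArg (fun ψ => (ψ x : D)) this
  simp only [hcdef, MonoidHom.coe_mk, OneHom.coe_mk] at hx
  have : h1 x * (h2 x)⁻¹ = 1 := hx
  rw [mul_inv_eq_one] at this
  simpa using this

/-- Composite of central extensions with perfect domain is central. -/
lemma comp_central {C B' X : Type u} [Group C] [Group B'] [Group X] (hperf : MyPerf C)
    (g : C →* B') (hgc : g.ker ≤ Subgroup.center C)
    (f : B' →* X) (hfc : f.ker ≤ Subgroup.center B') :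
    (f.comp g).ker ≤ Subgroup.center C := by
  intro x hx
  have hgx : g x ∈ Subgroup.center B' := by
    apply hfc
    simpa [MonoidHom.mem_ker] using hx
  have hmem : ∀ y : C, ⁅x, y⁆ ∈ Subgroup.center C := by
    intro y
    apply hgc
    have : Commute (g x) (g y) := (Subgroup.mem_center_iff.mp hgx (g y)).symm
    simp [MonoidHom.mem_ker, map_commutatorElement,
      commutatorElement_eq_one_iff_commute.mpr this]
  set φ : C →* Subgroup.center C :=
    { toFun := fun y => ⟨⁅x, y⁆, hmem y⟩
      map_one' := by ext; simp
      map_mul' := by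
        intro y z
        ext
        exact comm_mul x y z (fun w => Subgroup.mem_center_iff.mp (hmem z) w) } with hφdef
  have := hperf _ φ
  refine Subgroup.mem_center_iff.mpr fun y => ?_
  have hy := congrArg (fun ψ => (ψ y : C)) this
  simp only [hφdef, MonoidHom.coe_mk, OneHom.coe_mk] at hy
  have : ⁅x, y⁆ = 1 := hy
  exact (commutatorElement_eq_one_iff_commute.mp this).symm

lemma commutator_top_of_perf {C : Type u} [Group C] (hp : MyPerf C) :
    commutator C = ⊤ := by
  rw [eq_top_iff]
  intro x _
  have := hp (Abelianization C) Abelianization.of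
  have hx : Abelianization.of x = 1 := by rw [this]; rfl
  exact (QuotientGroup.eq_one_iff x).mp hx

lemma perf_of_commutator_top {C : Type u} [Group C] (h : commutator C = ⊤) :
    MyPerf C := by
  intro M _ φ
  ext x
  have hx : x ∈ commutator C := by rw [h]; trivial
  simpa [MonoidHom.mem_ker] using Abelianization.commutator_subset_ker φ hx

/-- A universal central extension's domain splits every central extension of itself. -/
lemma splits {A C P : Type u} [Group A] [Group C] [Group P] (u : C →* A)
    (hu : IsUniversalCentralExtension u) (p : P →* C) (hps : Function.Surjective p)
    (hpc : p.ker ≤ Subgroup.center P) :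
    ∃ s : C →* P, p.comp s = MonoidHom.id C := by
  have hperfC : MyPerf C := perf_of_uce u hu
  have hcomm : commutator C = ⊤ := commutator_top_of_perf hperfC
  set Q := commutator P with hQ
  have hmapQ : Q.map p = ⊤ := by
    rw [hQ, commutator_def, Subgroup.map_commutator,
      Subgroup.map_top_of_surjective p hps, ← commutator_def, hcomm]
  have hdec : ∀ x : P, ∃ y ∈ Q, ∃ k ∈ p.ker, x = y * k := by
    intro x
    have hx : p x ∈ Q.map p := by rw [hmapQ]; trivial
    obtain ⟨y, hy, hyx⟩ := hx
    refine ⟨y, hy, y⁻¹ * x, ?_, by rw [mul_inv_cancel_left]⟩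
    simp [MonoidHom.mem_ker, hyx]
  have hQQ : ⁅Q, Q⁆ = Q := by
    refine le_antisymm (by rw [hQ, commutator_def]; exact Subgroup.commutator_mono le_top le_top) ?_
    rw [hQ, commutator_def]
    refine Subgroup.commutator_le.mpr fun a _ b _ => ?_
    obtain ⟨y, hy, k, hk, rfl⟩ := hdec a
    obtain ⟨y', hy', k', hk', rfl⟩ := hdec b
    rw [comm_left y k _ (fun z => Subgroup.mem_center_iff.mp (hpc hk) z),
      comm_right y y' k' (fun z => Subgroup.mem_center_iff.mp (hpc hk') z)]
    exact Subgroup.commutator_mem_commutator hy hy'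
  have hcommQ : commutator ↥Q = ⊤ := by
    apply Subgroup.map_injective Q.subtype_injective
    rw [commutator_def, Subgroup.map_commutator, ← MonoidHom.range_eq_map,
      Q.range_subtype, hQQ]
  have hperfQ : MyPerf ↥Q := perf_of_commutator_top hcommQ
  set p' : ↥Q →* C := p.comp Q.subtype with hp'
  have hp's : Function.Surjective p' := by
    intro c
    have hc : c ∈ Q.map p := by rw [hmapQ]; trivial
    obtain ⟨y, hy, rfl⟩ := hc
    exact ⟨⟨y, hy⟩, rfl⟩
  have hp'c : p'.ker ≤ Subgroup.center ↥Q := by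
    intro q hq
    have hq1 : (q : P) ∈ p.ker := hq
    refine Subgroup.mem_center_iff.mpr fun r => ?_
    ext
    exact Subgroup.mem_center_iff.mp (hpc hq1) r
  have hcent : (u.comp p').ker ≤ Subgroup.center ↥Q :=
    comp_central hperfQ p' hp'c u hu.2.1
  obtain ⟨h, hh, -⟩ := hu.2.2 (↥Q) (u.comp p') (hu.1.comp hp's) hcent
  have hid : p'.comp h = MonoidHom.id C := by
    refine cancel hperfC u hu.2.1 _ _ ?_
    rw [← MonoidHom.comp_assoc, hh, MonoidHom.comp_id]
  exact ⟨Q.subtype.comp h, by rw [← MonoidHom.comp_assoc]; exact hid⟩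

/-- The pullback of a central extension is a central extension. -/
lemma pullback {B D X : Type u} [Group B] [Group D] [Group X] (g : B →* X) (e : D →* X)
    (hes : Function.Surjective e) (hec : e.ker ≤ Subgroup.center D) :
    ∃ (P : Subgroup (B × D)) (p1 : ↥P →* B) (p2 : ↥P →* D),
      Function.Surjective p1 ∧ p1.ker ≤ Subgroup.center ↥P ∧
      e.comp p2 = g.comp p1 := by
  set P : Subgroup (B × D) := (g.comp (MonoidHom.fst B D)).eqLocus (e.comp (MonoidHom.snd B D))
    with hP
  have hmem : ∀ x : ↥P, g (x : B × D).1 = e (x : B × D).2 := fun x => x.2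
  refine ⟨P, (MonoidHom.fst B D).comp P.subtype, (MonoidHom.snd B D).comp P.subtype, ?_, ?_, ?_⟩
  · intro b
    obtain ⟨d, hd⟩ := hes (g b)
    exact ⟨⟨(b, d), hd.symm⟩, rfl⟩
  · intro x hx
    have hx1 : (x : B × D).1 = 1 := hx
    have hx2 : (x : B × D).2 ∈ Subgroup.center D := by
      apply hec
      have := hmem x
      rw [hx1, map_one] at this
      simp [MonoidHom.mem_ker, ← this]
    refine Subgroup.mem_center_iff.mpr fun y => ?_
    ext
    · show ((y : B × D) * x).1 = ((x : B × D) * y).1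
      simp [hx1]
    · exact Subgroup.mem_center_iff.mp hx2 (y : B × D).2
  · ext x
    exact (hmem x).symm

end lemmas

theorem stmt_8 {A B C : Type u} [Group A] [Group B] [Group C]
    (f : B →* A) (g : C →* B)
    (hf : Function.Surjective f) (hfc : f.ker ≤ Subgroup.center B)
    (hg : Function.Surjective g) (hgc : g.ker ≤ Subgroup.center C) :
    IsUniversalCentralExtension (f.comp g) ↔ IsUniversalCentralExtension g := by
  constructor
  · intro hu
    have hperfC : MyPerf C := perf_of_uce _ hu
    refine ⟨hg, hgc, ?_⟩
    intro D _ e hes hec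
    obtain ⟨P, p1, p2, hp1s, hp1c, hcompat⟩ := pullback g e hes hec
    obtain ⟨s, hs⟩ := splits (f.comp g) hu p1 hp1s hp1c
    have key : e.comp (p2.comp s) = g := by
      rw [← MonoidHom.comp_assoc, hcompat, MonoidHom.comp_assoc, hs, MonoidHom.comp_id]
    refine ⟨p2.comp s, key, fun h' hh' => ?_⟩
    exact cancel hperfC e hec h' (p2.comp s) (by rw [hh', key])
  · intro hgu
    have hperfC : MyPerf C := perf_of_uce _ hgu
    refine ⟨hf.comp hg, comp_central hperfC g hgc f hfc, ?_⟩
    intro D _ e hes hec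
    obtain ⟨P, p1, p2, hp1s, hp1c, hcompat⟩ := pullback f e hes hec
    obtain ⟨k, hk, -⟩ := hgu.2.2 (↥P) p1 hp1s hp1c
    have key : e.comp (p2.comp k) = f.comp g := by
      rw [← MonoidHom.comp_assoc, hcompat, MonoidHom.comp_assoc, hk]
    refine ⟨p2.comp k, key, fun h' hh' => ?_⟩
    exact cancel hperfC e hec h' (p2.comp k) (by rw [hh', key])
end

section
/- Let A be a perfect group, let f : F → A be a surjective homomorphism from a free group F, and let R = ker f. Then the induced map [F,F]/[R,F] → A (given by restriction of f to the commutator subgroup, which descends to the quotient) is surjective, its kernel is (R ∩ [F,F])/[R,F], and this kernel is contained in the center of [F,F]/[R,F]; i.e. it is a central extension of A. -/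
universe u

theorem stmt_16 {A : Type u} [Group A] (hA : commutator A = ⊤)
    {α : Type u} (f : FreeGroup α →* A) (hf : Function.Surjective f) :
    ∃ φ : commutator (FreeGroup α) ⧸
        ((⁅f.ker, (⊤ : Subgroup (FreeGroup α))⁆).subgroupOf (commutator (FreeGroup α))) →* A,
      (∀ x : commutator (FreeGroup α), φ (QuotientGroup.mk x) = f x) ∧
      Function.Surjective φ ∧
      φ.ker = Subgroup.map
        (QuotientGroup.mk'
          ((⁅f.ker, (⊤ : Subgroup (FreeGroup α))⁆).subgroupOf (commutator (FreeGroup α))))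
        ((f.ker ⊓ commutator (FreeGroup α)).subgroupOf (commutator (FreeGroup α))) ∧
      φ.ker ≤ Subgroup.center
        (commutator (FreeGroup α) ⧸
          ((⁅f.ker, (⊤ : Subgroup (FreeGroup α))⁆).subgroupOf (commutator (FreeGroup α)))) := by
  set C : Subgroup (FreeGroup α) := commutator (FreeGroup α) with hC
  set N : Subgroup (FreeGroup α) := ⁅f.ker, (⊤ : Subgroup (FreeGroup α))⁆ with hN
  set K : Subgroup C := N.subgroupOf C with hK
  -- N ≤ ker f
  have hNker : N ≤ f.ker := by
    rw [hN, Subgroup.commutator_le]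
    intro g hg h _
    have : f g = 1 := hg
    simp [MonoidHom.mem_ker, map_commutatorElement, commutatorElement_def, this]
  have hKtriv : ∀ x ∈ K, f.comp C.subtype x = 1 := by
    intro x hx
    exact hNker (Subgroup.mem_subgroupOf.mp hx)
  refine ⟨QuotientGroup.lift K (f.comp C.subtype) hKtriv, ?_, ?_, ?_, ?_⟩
  · intro x; rfl
  · -- surjectivity
    intro a
    have : a ∈ Subgroup.map f C := by
      rw [hC, commutator_def, Subgroup.map_commutator]
      have : Subgroup.map f ⊤ = ⊤ := by
        rw [Subgroup.map_top_of_surjective f hf]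
      rw [this, ← commutator_def, hA]
      trivial
    obtain ⟨x, hxC, hx⟩ := this
    exact ⟨QuotientGroup.mk ⟨x, hxC⟩, hx⟩
  · -- kernel
    ext q
    induction q using QuotientGroup.induction_on with
    | H x =>
      constructor
      · intro hq
        have hfx : f x = 1 := hq
        refine ⟨x, ?_, rfl⟩
        exact SetLike.mem_coe.mpr (Subgroup.mem_subgroupOf.mpr ⟨hfx, x.2⟩)
      · rintro ⟨y, hy, hyx⟩
        rw [SetLike.mem_coe, Subgroup.mem_subgroupOf] at hy
        have : (QuotientGroup.lift K (f.comp C.subtype) hKtriv) (QuotientGroup.mk x)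
            = (QuotientGroup.lift K (f.comp C.subtype) hKtriv) (QuotientGroup.mk y) := by
          rw [show QuotientGroup.mk y = QuotientGroup.mk' K y from rfl, hyx]
        rw [MonoidHom.mem_ker, this]
        exact hy.1
  · -- centrality
    intro q hq
    induction q using QuotientGroup.induction_on with
    | H x =>
      have hfx : (x : FreeGroup α) ∈ f.ker := hq
      rw [Subgroup.mem_center_iff]
      intro z
      induction z using QuotientGroup.induction_on with
      | H y =>
        show QuotientGroup.mk (y * x) = QuotientGroup.mk (x * y)
        rw [QuotientGroup.eq]
        rw [Subgroup.mem_subgroupOf]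
        open scoped commutatorElement in
        have : (((y * x)⁻¹ * (x * y) : C) : FreeGroup α)
            = ⁅((x : FreeGroup α))⁻¹, ((y : FreeGroup α))⁻¹⁆ := by
          push_cast
          group
        rw [this]
        exact Subgroup.commutator_mem_commutator (inv_mem hfx) trivial
end

section
/- Let u : U → A be a universal central extension of groups. Then every central extension g : V → U of the group U splits, i.e. admits a homomorphic section. -/
universe u

theorem stmt_17 {A U : Type u} [Group A] [Group U]
    (u : U →* A) (hu : Function.Surjective u)
    (huc : u.ker ≤ Subgroup.center U)
    (huniv : ∀ (B : Type u) [Group B] (f : B →* A),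
      Function.Surjective f → f.ker ≤ Subgroup.center B →
      ∃! h : U →* B, f.comp h = u) :
    ∀ (V : Type u) [Group V] (g : V →* U),
      Function.Surjective g → g.ker ≤ Subgroup.center V →
      ∃ s : U →* V, g.comp s = MonoidHom.id U := by
  -- Step 1: U is perfect.
  have hperf : commutator U = ⊤ := by
    by_contra hne
    obtain ⟨x, hx⟩ : ∃ x : U, x ∉ commutator U := by
      by_contra h
      push_neg at h
      exact hne ((Subgroup.eq_top_iff' _).2 h)
    set B := U × Abelianization U with hB
    have hfst : Function.Surjective (MonoidHom.fst U (Abelianization U)) :=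
      fun a => ⟨(a, 1), rfl⟩
    set f : B →* A := u.comp (MonoidHom.fst U (Abelianization U)) with hf
    have hfs : Function.Surjective f := hu.comp hfst
    have hfc : f.ker ≤ Subgroup.center B := by
      intro p hp
      rw [MonoidHom.mem_ker] at hp
      rw [Subgroup.mem_center_iff]
      intro q
      have h1 : p.1 ∈ u.ker := hp
      have h1c := huc h1
      rw [Subgroup.mem_center_iff] at h1c
      ext
      · exact h1c q.1
      · exact mul_comm q.2 p.2
    obtain ⟨h, -, huniq⟩ := huniv B f hfs hfc
    have e1 : f.comp ((MonoidHom.id U).prod 1) = u := by ext x; rfl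
    have e2 : f.comp ((MonoidHom.id U).prod Abelianization.of) = u := by ext x; rfl
    have := (huniq _ e1).trans (huniq _ e2).symm
    have hx1 : Abelianization.of x = 1 := by
      have := congrArg (fun k => (k x).2) this
      exact this.symm
    exact hx ((QuotientGroup.eq_one_iff x).mp hx1)
  intro V _ g hg hgc
  -- Step 2: the composite u ∘ g is a central extension of A.
  have hcc : (u.comp g).ker ≤ Subgroup.center V := by
    intro x hx
    rw [MonoidHom.mem_ker, MonoidHom.comp_apply] at hx
    have hgx : g x ∈ u.ker := hx
    have hgxc := huc hgx
    rw [Subgroup.mem_center_iff] at hgxc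
    -- commutator with x lands in ker g
    have hker : ∀ y : V, x * y * x⁻¹ * y⁻¹ ∈ g.ker := by
      intro y
      rw [MonoidHom.mem_ker]
      simp only [map_mul, map_inv]
      rw [← hgxc (g y)]
      group
    have hZ : ∀ y : V, x * y * x⁻¹ * y⁻¹ ∈ Subgroup.center V := fun y => hgc (hker y)
    -- φ : V →* V, y ↦ [x,y], a homomorphism since its values are central
    set φ : V →* V :=
      { toFun := fun y => x * y * x⁻¹ * y⁻¹
        map_one' := by group
        map_mul' := by
          intro y z
          have hc := Subgroup.mem_center_iff.mp (hZ z)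
          calc x * (y * z) * x⁻¹ * (y * z)⁻¹
              = x * y * x⁻¹ * ((x * z * x⁻¹ * z⁻¹) * y⁻¹) := by group
            _ = x * y * x⁻¹ * (y⁻¹ * (x * z * x⁻¹ * z⁻¹)) := by rw [hc y⁻¹]
            _ = (x * y * x⁻¹ * y⁻¹) * (x * z * x⁻¹ * z⁻¹) := by group } with hφ
    have hφker : g.ker ≤ φ.ker := by
      intro c hc
      have hcen := Subgroup.mem_center_iff.mp (hgc hc)
      rw [MonoidHom.mem_ker]
      show x * c * x⁻¹ * c⁻¹ = 1
      rw [hcen x]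
      group
    have hφcomm : commutator V ≤ φ.ker := by
      rw [commutator_def, Subgroup.commutator_le]
      intro y _ z _
      rw [MonoidHom.mem_ker, map_commutatorElement]
      exact commutatorElement_eq_one_iff_commute.mpr
        (Subgroup.mem_center_iff.mp (hZ y) (φ z)).symm
    have hφ1 : ∀ y : V, φ y = 1 := by
      intro y
      have hmap : Subgroup.map g (commutator V) = ⊤ := by
        rw [commutator_def, Subgroup.map_commutator,
          Subgroup.map_top_of_surjective g hg, ← commutator_def, hperf]
      have : g y ∈ Subgroup.map g (commutator V) := by rw [hmap]; trivial
      obtain ⟨w, hw, hgw⟩ := this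
      have h1 : y * w⁻¹ ∈ g.ker := by
        rw [MonoidHom.mem_ker, map_mul, map_inv, hgw]
        group
      have : φ (y * w⁻¹ * w) = 1 := by
        rw [map_mul, hφker h1, hφcomm hw, one_mul]
      simpa using this
    rw [Subgroup.mem_center_iff]
    intro y
    have := hφ1 y
    have hxy : x * y * x⁻¹ * y⁻¹ = 1 := this
    have : x * y = y * x := by
      have := congrArg (· * (y * x)) hxy
      simpa [mul_assoc] using this
    exact this.symm
  -- Step 3: get the lift and show it is a section.
  obtain ⟨h, hh, -⟩ := huniv V (u.comp g) (hu.comp hg) hcc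
  refine ⟨h, ?_⟩
  obtain ⟨k, -, hku⟩ := huniv U u hu huc
  have e1 : u.comp (g.comp h) = u := by rw [← MonoidHom.comp_assoc, hh]
  have e2 : u.comp (MonoidHom.id U) = u := MonoidHom.comp_id u
  exact (hku _ e1).trans (hku _ e2).symm
end
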